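/- Let D ⊣ C : A ⇄ P be an adjunction between categories with pullbacks and σ : S → R a Galois descent morphism. Then the sliced right adjoint C_R : P/DR → A/R factors through the full subcategory Split_R(σ) ⊆ A/R; that is, for every object Y_ψ of P/DR, the object C_R(Y_ψ) is σ-split. -/

import Mathlib

open CategoryTheory Limits

/-- If the counit of an adjunction is an isomorphism, then the unit is an isomorphism
at every object in the image of the right adjoint. -/
lemma unit_isIso_of_counit_isIso {C D : Type*} [Category C] [Category D]
    {F : C ⥤ D} {G : D ⥤ C} (adj : F ⊣ G) (h : IsIso adj.counit) (X : D) :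
    IsIso (adj.unit.app (G.obj X)) := by
  have h1 : IsIso (adj.counit.app X) := inferInstance
  have h2 : IsIso (G.map (adj.counit.app X)) := inferInstance
  have h3 := adj.right_triangle_components X
  have key : adj.unit.app (G.obj X) = inv (G.map (adj.counit.app X)) := by
    have := congrArg (· ≫ inv (G.map (adj.counit.app X))) h3
    simpa using this
  rw [key]; infer_instance

/-- Being an iso component of a natural transformation from the identity transfers
along isomorphisms of objects. -/
lemma unit_isIso_of_iso {C : Type*} [Category C] {T : C ⥤ C} (η : 𝟭 C ⟶ T)
    {Z W : C} (e : Z ≅ W) (h : IsIso (η.app W)) : IsIso (η.app Z) := by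
  have hn := η.naturality e.hom
  simp only [Functor.id_map] at hn
  have : η.app Z = e.hom ≫ η.app W ≫ inv (T.map e.hom) := by
    rw [← Category.assoc, hn, Category.assoc, IsIso.hom_inv_id, Category.comp_id]
  rw [this]
  infer_instance

/-- Let `F ⊣ U : A ⇄ P` be an adjunction between categories with
pullbacks and `σ : S ⟶ R` a Galois descent morphism (σ* monadic; counit sliced at `S`
an isomorphism; every `Σ_σ U_S X` is `σ`-split).  Then the sliced right adjoint
`U_R : P/FR ⥤ A/R` factors through `Split_R(σ)`: for every object `Y` of `P/FR`, the
object `U_R(Y)` is `σ`-split. -/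
theorem stmt8 {A P : Type*} [Category A] [Category P] [HasPullbacks A] [HasPullbacks P]
    (F : A ⥤ P) (U : P ⥤ A) (adj : F ⊣ U) {S R : A} (σ : S ⟶ R)
    (US : Over (F.obj S) ⥤ Over S)
    (adjS : (Over.post F : Over S ⥤ Over (F.obj S)) ⊣ US)
    (UR : Over (F.obj R) ⥤ Over R)
    (adjR : (Over.post F : Over R ⥤ Over (F.obj R)) ⊣ UR)
    [MonadicRightAdjoint (Over.pullback σ)]
    (hcounit : IsIso adjS.counit)
    (hsplit : ∀ X : Over (F.obj S),
      IsIso (adjS.unit.app ((Over.pullback σ).obj ((Over.map σ).obj (US.obj X))))) :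
    ∀ Y : Over (F.obj R),
      IsIso (adjS.unit.app ((Over.pullback σ).obj (UR.obj Y))) := by
  intro Y
  -- The two composite left adjoints agree up to natural isomorphism.
  have isoL : (Over.map σ ⋙ (Over.post F : Over R ⥤ Over (F.obj R))) ≅
      ((Over.post F : Over S ⥤ Over (F.obj S)) ⋙ Over.map (F.map σ)) :=
    NatIso.ofComponents
      (fun X => Over.isoMk (Iso.refl _) (by simp [Over.post]))
      (fun f => by ext; simp [Over.post])
  -- Adjunctions for the two composites.
  have adj1 : (Over.map σ ⋙ (Over.post F : Over R ⥤ Over (F.obj R))) ⊣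
      (UR ⋙ Over.pullback σ) := (Over.mapPullbackAdj σ).comp adjR
  have adj2 : (Over.map σ ⋙ (Over.post F : Over R ⥤ Over (F.obj R))) ⊣
      (Over.pullback (F.map σ) ⋙ US) :=
    (adjS.comp (Over.mapPullbackAdj (F.map σ))).ofNatIsoLeft isoL.symm
  -- Hence the right adjoints are isomorphic (Beck–Chevalley style commutation).
  have e : (UR ⋙ Over.pullback σ) ≅ (Over.pullback (F.map σ) ⋙ US) :=
    adj1.rightAdjointUniq adj2
  exact unit_isIso_of_iso adjS.unit (e.app Y)
    (unit_isIso_of_counit_isIso adjS hcounit ((Over.pullback (F.map σ)).obj Y))
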